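/- Let $U_1,\ldots,U_m \subset \mathbb{R}^n$ be nonempty closed convex sets with $S := \bigcap_i U_i \neq \varnothing$, and define the composition of projections $T_{\mathrm{MAP}} x := P_{U_m} P_{U_{m-1}} \cdots P_{U_1} x$. Then for every $s \in S$ and $x \in \mathbb{R}^n$, $\|T_{\mathrm{MAP}} x - s\|^2 \le \|x - s\|^2 - \tfrac{1}{m}\,\delta(x)^2$, where $\delta(x) = \max_{1\le i\le m} \mathrm{dist}(x, U_i)$. -/
import Mathlib


open Metric RealInnerProductSpace

lemma pyth_aux {E : Type*} [NormedAddCommGroup E] [InnerProductSpace ℝ E]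
    {U : Set E} (hcv : Convex ℝ U) {v z s : E} (hv : v ∈ U) (hs : s ∈ U)
    (hmin : ∀ y ∈ U, ‖z - v‖ ≤ ‖z - y‖) :
    ‖v - s‖ ^ 2 + ‖z - v‖ ^ 2 ≤ ‖z - s‖ ^ 2 := by
  haveI : Nonempty U := ⟨⟨v, hv⟩⟩
  have hinf : ‖z - v‖ = ⨅ w : U, ‖z - w‖ := by
    refine le_antisymm (le_ciInf fun w => hmin w w.2) ?_
    have hbb : BddBelow (Set.range fun w : U => ‖z - (w : E)‖) :=
      ⟨0, by rintro y ⟨w, rfl⟩; exact norm_nonneg _⟩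
    exact ciInf_le hbb ⟨v, hv⟩
  have hvar := (norm_eq_iInf_iff_real_inner_le_zero hcv hv).mp hinf s hs
  have hzs : z - s = (z - v) + (v - s) := by abel
  rw [hzs, norm_add_sq_real]
  have h2 : ⟪z - v, v - s⟫ = -⟪z - v, s - v⟫ := by
    rw [← inner_neg_right]; congr 1; abel
  rw [h2]; linarith


theorem stmt15 {n m : ℕ} (hm : 0 < m) (U : Fin m → Set (EuclideanSpace ℝ (Fin n)))
    (hUne : ∀ i, (U i).Nonempty) (hUcl : ∀ i, IsClosed (U i)) (hUcv : ∀ i, Convex ℝ (U i))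
    (hS : (⋂ i, U i).Nonempty)
    (P : Fin m → EuclideanSpace ℝ (Fin n) → EuclideanSpace ℝ (Fin n))
    (hPmem : ∀ i z, P i z ∈ U i)
    (hPproj : ∀ i z, ∀ y ∈ U i, ‖z - P i z‖ ≤ ‖z - y‖) :
    ∀ s ∈ ⋂ i, U i, ∀ x : EuclideanSpace ℝ (Fin n),
      ‖(List.ofFn P).foldl (fun y f => f y) x - s‖ ^ 2 ≤
        ‖x - s‖ ^ 2 - (1 / m) * (⨆ i, infDist x (U i)) ^ 2 := by
  intro s hs x
  -- the chain of iterates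
  set p : ℕ → EuclideanSpace ℝ (Fin n) := fun k =>
    Nat.rec x (fun k pk => if h : k < m then P ⟨k, h⟩ pk else pk) k with hp
  have hpsucc : ∀ k (h : k < m), p (k + 1) = P ⟨k, h⟩ (p k) := by
    intro k h; simp [hp, h]
  -- foldl equals p m
  have hfoldl : ∀ k, k ≤ m → ((List.ofFn P).take k).foldl (fun y f => f y) x = p k := by
    intro k
    induction k with
    | zero => intro _; simp [hp]
    | succ k ih =>
      intro hk
      have hk' : k < m := hk
      have hget : (List.ofFn P)[k]? = some (P ⟨k, hk'⟩) := by
        rw [List.getElem?_eq_getElem (by simpa using hk')]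
        simp
      rw [List.take_succ, List.foldl_append, ih hk'.le, hpsucc k hk']
      simp [hget]
  have hpm : (List.ofFn P).foldl (fun y f => f y) x = p m := by
    have := hfoldl m le_rfl
    rwa [List.take_of_length_le (by simp)] at this
  -- each p (k+1) is in U k
  have hmem : ∀ (k : Fin m), p (k + 1) ∈ U k := by
    intro k
    rw [hpsucc k k.2]
    exact hPmem _ _
  -- telescoping Fejér inequality
  have key : ∀ j, j ≤ m →
      ‖p j - s‖ ^ 2 + ∑ k ∈ Finset.range j, ‖p k - p (k + 1)‖ ^ 2 ≤ ‖x - s‖ ^ 2 := by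
    intro j
    induction j with
    | zero => intro _; simp [hp]
    | succ j ih =>
      intro hj
      have hj' : j < m := hj
      have hsU : s ∈ U ⟨j, hj'⟩ := Set.mem_iInter.mp hs _
      have hstep := pyth_aux (hUcv ⟨j, hj'⟩) (hPmem ⟨j, hj'⟩ (p j)) hsU
        (hPproj ⟨j, hj'⟩ (p j))
      rw [← hpsucc j hj'] at hstep
      rw [Finset.sum_range_succ]
      linarith [ih hj'.le]
  -- bound the sup by the sum of step lengths
  have hnn : ∀ k ∈ Finset.range m, (0:ℝ) ≤ ‖p k - p (k + 1)‖ :=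
    fun k _ => norm_nonneg _
  set A : ℝ := ∑ k ∈ Finset.range m, ‖p k - p (k + 1)‖ with hA
  haveI : Nonempty (Fin m) := ⟨⟨0, hm⟩⟩
  have hsup : (⨆ i, infDist x (U i)) ≤ A := by
    refine ciSup_le fun i => ?_
    have h1 : infDist x (U i) ≤ dist x (p (i + 1)) := infDist_le_dist_of_mem (hmem i)
    have h2 : dist (p 0) (p (i + 1)) ≤ ∑ k ∈ Finset.range (i + 1), dist (p k) (p (k + 1)) :=
      dist_le_range_sum_dist p (i + 1)
    have h3 : ∑ k ∈ Finset.range (i + 1), dist (p k) (p (k + 1)) ≤ A := by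
      rw [hA]
      simp only [dist_eq_norm]
      exact Finset.sum_le_sum_of_subset_of_nonneg
        (Finset.range_subset_range.mpr i.2) (fun k hk _ => norm_nonneg _)
    have hp0 : p 0 = x := rfl
    calc infDist x (U i) ≤ dist x (p (i + 1)) := h1
      _ = dist (p 0) (p (i + 1)) := by rw [hp0]
      _ ≤ A := h2.trans h3
  have hsupnn : (0:ℝ) ≤ ⨆ i, infDist x (U i) := by
    have : infDist x (U ⟨0, hm⟩) ≤ ⨆ i, infDist x (U i) :=
      le_ciSup (f := fun i => infDist x (U i)) (Set.Finite.bddAbove (Set.finite_range _)) (⟨0, hm⟩ : Fin m)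
    linarith [infDist_nonneg (s := U ⟨0, hm⟩) (x := x)]
  have hsq : (⨆ i, infDist x (U i)) ^ 2 ≤ A ^ 2 := by
    apply sq_le_sq' <;> nlinarith
  have hCS : A ^ 2 ≤ (m : ℝ) * ∑ k ∈ Finset.range m, ‖p k - p (k + 1)‖ ^ 2 := by
    have := sq_sum_le_card_mul_sum_sq (s := Finset.range m)
      (f := fun k => ‖p k - p (k + 1)‖)
    simpa using this
  have hmpos : (0:ℝ) < m := by exact_mod_cast hm
  have hkey := key m le_rfl
  rw [hpm]
  have hfin : (1 / (m:ℝ)) * (⨆ i, infDist x (U i)) ^ 2 ≤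
      ∑ k ∈ Finset.range m, ‖p k - p (k + 1)‖ ^ 2 := by
    rw [div_mul_eq_mul_div, one_mul, div_le_iff₀ hmpos]
    calc (⨆ i, infDist x (U i)) ^ 2 ≤ A ^ 2 := hsq
      _ ≤ (m : ℝ) * ∑ k ∈ Finset.range m, ‖p k - p (k + 1)‖ ^ 2 := hCS
      _ = (∑ k ∈ Finset.range m, ‖p k - p (k + 1)‖ ^ 2) * m := mul_comm _ _
  linarith
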